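/- arXiv:1411.5503 — 5 statements merged into one kernel-verified Lean document; each statement's English description precedes it below -/
import Mathlib

section
/- Let μ : (0,∞) → ℝ be twice continuously differentiable and let φ : (0,∞) → ℝ satisfy φ'(s) = μ(s)/s² for all s > 0. Let γ > 1, let Ω ⊆ ℝ² be open with coordinates (t,x), and let ρ, u : Ω → ℝ be twice continuously differentiable with ρ > 0 on Ω, satisfying on Ω the 1D compressible Navier–Stokes system ∂_t ρ + ∂_x(ρu) = 0 and ∂_t(ρu) + ∂_x(ρu²) − ∂_x(μ(ρ)∂_x u) + ∂_x(ρ^γ) = 0. Define the effective velocity v = u + φ'(ρ)∂_x ρ. Then on Ω one has ∂_t ρ − ∂_x((μ(ρ)/ρ)∂_x ρ) + ∂_x(ρv) = 0 and ρ ∂_t v + ρ u ∂_x v + ∂_x(ρ^γ) = 0. -/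
open Real Set

/-- Partial derivative with respect to the first variable (time). -/
noncomputable def pdt (f : ℝ × ℝ → ℝ) (z : ℝ × ℝ) : ℝ := deriv (fun s => f (s, z.2)) z.1

/-- Partial derivative with respect to the second variable (space). -/
noncomputable def pdx (f : ℝ × ℝ → ℝ) (z : ℝ × ℝ) : ℝ := deriv (fun y => f (z.1, y)) z.2

private lemma slT {f : ℝ × ℝ → ℝ} {L : ℝ × ℝ →L[ℝ] ℝ} {z : ℝ × ℝ}
    (h : HasFDerivAt f L z) : HasDerivAt (fun s => f (s, z.2)) (L (1, 0)) z.1 := by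
  have hc : HasDerivAt (fun s : ℝ => ((s, z.2) : ℝ × ℝ)) (((1 : ℝ), (0 : ℝ))) z.1 :=
    (hasDerivAt_id z.1).prodMk (hasDerivAt_const z.1 z.2)
  exact h.comp_hasDerivAt_of_eq z.1 hc rfl

private lemma slX {f : ℝ × ℝ → ℝ} {L : ℝ × ℝ →L[ℝ] ℝ} {z : ℝ × ℝ}
    (h : HasFDerivAt f L z) : HasDerivAt (fun y => f (z.1, y)) (L (0, 1)) z.2 := by
  have hc : HasDerivAt (fun y : ℝ => ((z.1, y) : ℝ × ℝ)) (((0 : ℝ), (1 : ℝ))) z.2 :=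
    (hasDerivAt_const z.2 z.1).prodMk (hasDerivAt_id z.2)
  exact h.comp_hasDerivAt_of_eq z.2 hc rfl

private lemma pdt_eq {f : ℝ × ℝ → ℝ} {L : ℝ × ℝ →L[ℝ] ℝ} {z : ℝ × ℝ}
    (h : HasFDerivAt f L z) : pdt f z = L (1, 0) := (slT h).deriv

private lemma pdx_eq {f : ℝ × ℝ → ℝ} {L : ℝ × ℝ →L[ℝ] ℝ} {z : ℝ × ℝ}
    (h : HasFDerivAt f L z) : pdx f z = L (0, 1) := (slX h).deriv

private lemma pdt_congr {f g : ℝ × ℝ → ℝ} {z : ℝ × ℝ} (h : f =ᶠ[nhds z] g) :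
    pdt f z = pdt g z := by
  apply Filter.EventuallyEq.deriv_eq
  have ht : Filter.Tendsto (fun s : ℝ => ((s, z.2) : ℝ × ℝ)) (nhds z.1) (nhds z) := by
    have := ((continuous_id.prodMk (continuous_const (y := z.2)))).tendsto z.1
    simpa using this
  exact h.comp_tendsto ht

private lemma pdx_congr {f g : ℝ × ℝ → ℝ} {z : ℝ × ℝ} (h : f =ᶠ[nhds z] g) :
    pdx f z = pdx g z := by
  apply Filter.EventuallyEq.deriv_eq
  have ht : Filter.Tendsto (fun y : ℝ => ((z.1, y) : ℝ × ℝ)) (nhds z.2) (nhds z) := by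
    have := ((continuous_const (y := z.1)).prodMk continuous_id).tendsto z.2
    simpa using this
  exact h.comp_tendsto ht

set_option maxHeartbeats 2000000 in
theorem stmt_0 (μ φ : ℝ → ℝ) (γ : ℝ) (Ω : Set (ℝ × ℝ)) (ρ u v : ℝ × ℝ → ℝ)
    (hμ : ContDiffOn ℝ 2 μ (Set.Ioi 0))
    (hφ : ∀ s : ℝ, 0 < s → HasDerivAt φ (μ s / s ^ 2) s)
    (hγ : 1 < γ) (hΩ : IsOpen Ω)
    (hρC : ContDiffOn ℝ 2 ρ Ω) (huC : ContDiffOn ℝ 2 u Ω)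
    (hρpos : ∀ z ∈ Ω, 0 < ρ z)
    (hmass : ∀ z ∈ Ω, pdt ρ z + pdx (fun q => ρ q * u q) z = 0)
    (hmom : ∀ z ∈ Ω,
      pdt (fun q => ρ q * u q) z + pdx (fun q => ρ q * u q ^ 2) z
        - pdx (fun q => μ (ρ q) * pdx u q) z + pdx (fun q => ρ q ^ γ) z = 0)
    (hv : ∀ q, v q = u q + deriv φ (ρ q) * pdx ρ q) :
    ∀ z ∈ Ω,
      (pdt ρ z - pdx (fun q => μ (ρ q) / ρ q * pdx ρ q) z
          + pdx (fun q => ρ q * v q) z = 0)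
      ∧ (ρ z * pdt v z + ρ z * u z * pdx v z + pdx (fun q => ρ q ^ γ) z = 0) := by
  intro z hz
  have one_le : (2 : WithTop ℕ∞) ≠ 0 := by norm_num
  have hzn : Ω ∈ nhds z := hΩ.mem_nhds hz
  have hρ2 : ContDiffAt ℝ 2 ρ z := hρC.contDiffAt hzn
  have hu2 : ContDiffAt ℝ 2 u z := huC.contDiffAt hzn
  have hρd : HasFDerivAt ρ (fderiv ℝ ρ z) z := (hρ2.differentiableAt one_le).hasFDerivAt
  have hud : HasFDerivAt u (fderiv ℝ u z) z := (hu2.differentiableAt one_le).hasFDerivAt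
  have hr : 0 < ρ z := hρpos z hz
  -- second derivatives
  have hρ1' : ContDiffAt ℝ 1 (fderiv ℝ ρ) z := hρ2.fderiv_right (by norm_num)
  have hu1' : ContDiffAt ℝ 1 (fderiv ℝ u) z := hu2.fderiv_right (by norm_num)
  have hHρ : HasFDerivAt (fderiv ℝ ρ) (fderiv ℝ (fderiv ℝ ρ) z) z :=
    (hρ1'.differentiableAt one_ne_zero).hasFDerivAt
  have hHu : HasFDerivAt (fderiv ℝ u) (fderiv ℝ (fderiv ℝ u) z) z :=
    (hu1'.differentiableAt one_ne_zero).hasFDerivAt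
  have hev : ∀ᶠ q in nhds z, HasFDerivAt ρ (fderiv ℝ ρ q) q := by
    filter_upwards [hzn] with q hq
    exact ((hρC.contDiffAt (hΩ.mem_nhds hq)).differentiableAt one_le).hasFDerivAt
  have hsym : fderiv ℝ (fderiv ℝ ρ) z (0, 1) (1, 0) = fderiv ℝ (fderiv ℝ ρ) z (1, 0) (0, 1) :=
    second_derivative_symmetric_of_eventually hev hHρ ((0 : ℝ), (1 : ℝ)) ((1 : ℝ), (0 : ℝ))
  -- evaluation maps
  have hFρ : HasFDerivAt (fun q => fderiv ℝ ρ q (0, 1))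
      ((ContinuousLinearMap.apply ℝ ℝ (((0 : ℝ), (1 : ℝ)))).comp (fderiv ℝ (fderiv ℝ ρ) z)) z :=
    (ContinuousLinearMap.apply ℝ ℝ (((0 : ℝ), (1 : ℝ)))).hasFDerivAt.comp z hHρ
  have hGρ : HasFDerivAt (fun q => fderiv ℝ ρ q (1, 0))
      ((ContinuousLinearMap.apply ℝ ℝ (((1 : ℝ), (0 : ℝ)))).comp (fderiv ℝ (fderiv ℝ ρ) z)) z :=
    (ContinuousLinearMap.apply ℝ ℝ (((1 : ℝ), (0 : ℝ)))).hasFDerivAt.comp z hHρ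
  have hFu : HasFDerivAt (fun q => fderiv ℝ u q (0, 1))
      ((ContinuousLinearMap.apply ℝ ℝ (((0 : ℝ), (1 : ℝ)))).comp (fderiv ℝ (fderiv ℝ u) z)) z :=
    (ContinuousLinearMap.apply ℝ ℝ (((0 : ℝ), (1 : ℝ)))).hasFDerivAt.comp z hHu
  -- eventual identification of partial derivatives with fderiv
  have hEρx : ∀ᶠ q in nhds z, pdx ρ q = fderiv ℝ ρ q (0, 1) := by
    filter_upwards [hzn] with q hq
    exact pdx_eq (((hρC.contDiffAt (hΩ.mem_nhds hq)).differentiableAt one_le).hasFDerivAt)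
  have hEux : ∀ᶠ q in nhds z, pdx u q = fderiv ℝ u q (0, 1) := by
    filter_upwards [hzn] with q hq
    exact pdx_eq (((huC.contDiffAt (hΩ.mem_nhds hq)).differentiableAt one_le).hasFDerivAt)
  -- φ facts
  have hφ' : ∀ s : ℝ, 0 < s → deriv φ s = μ s / s ^ 2 := fun s hs => (hφ s hs).deriv
  have hμd : HasDerivAt μ (deriv μ (ρ z)) (ρ z) :=
    ((hμ.contDiffAt (Ioi_mem_nhds hr)).differentiableAt one_le).hasDerivAt
  have hsq : HasDerivAt (fun s : ℝ => s ^ 2) (2 * ρ z) (ρ z) := by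
    simpa using hasDerivAt_pow 2 (ρ z)
  have hφ'' : HasDerivAt (deriv φ)
      ((deriv μ (ρ z) * (ρ z) ^ 2 - μ (ρ z) * (2 * ρ z)) / ((ρ z) ^ 2) ^ 2) (ρ z) := by
    apply HasDerivAt.congr_of_eventuallyEq (hμd.div hsq (pow_ne_zero 2 hr.ne'))
    filter_upwards [Ioi_mem_nhds hr] with s hs
    exact hφ' s hs
  -- composite 2D derivatives at z
  have hφρ : HasFDerivAt (fun q => deriv φ (ρ q))
      (((deriv μ (ρ z) * (ρ z) ^ 2 - μ (ρ z) * (2 * ρ z)) / ((ρ z) ^ 2) ^ 2) • fderiv ℝ ρ z) z :=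
    hφ''.comp_hasFDerivAt z hρd
  have hμρ : HasFDerivAt (fun q => μ (ρ q)) (deriv μ (ρ z) • fderiv ℝ ρ z) z :=
    hμd.comp_hasFDerivAt z hρd
  have hρu : HasFDerivAt (fun q => ρ q * u q)
      (ρ z • fderiv ℝ u z + u z • fderiv ℝ ρ z) z := hρd.mul hud
  -- mass equation in scalar form at z
  have hM : fderiv ℝ ρ z (1, 0) + (ρ z * fderiv ℝ u z (0, 1) + u z * fderiv ℝ ρ z (0, 1)) = 0 := by
    have h0 := hmass z hz
    rw [pdt_eq hρd, pdx_eq hρu] at h0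
    simpa using h0
  -- First equation
  have e1a : pdx (fun q => μ (ρ q) / ρ q * pdx ρ q) z
      = pdx (fun q => μ (ρ q) * (ρ q)⁻¹ * fderiv ℝ ρ q (0, 1)) z := by
    apply pdx_congr
    filter_upwards [hEρx] with q hq
    rw [hq, div_eq_mul_inv]
  have e1b : pdx (fun q => ρ q * v q) z
      = pdx (fun q => ρ q * u q + μ (ρ q) * (ρ q)⁻¹ * fderiv ℝ ρ q (0, 1)) z := by
    apply pdx_congr
    filter_upwards [hzn, hEρx] with q hq hq2
    rw [hv q, hφ' (ρ q) (hρpos q hq), hq2, div_eq_mul_inv]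
    field_simp [(hρpos q hq).ne']
  have hinv : HasFDerivAt (fun q => (ρ q)⁻¹) ((-((ρ z) ^ 2)⁻¹) • fderiv ℝ ρ z) z :=
    (hasDerivAt_inv hr.ne').comp_hasFDerivAt z hρd
  have hA : HasFDerivAt (fun q => μ (ρ q) * (ρ q)⁻¹ * fderiv ℝ ρ q (0, 1)) _ z := (hμρ.mul hinv).mul hFρ
  have hAB : HasFDerivAt (fun q => ρ q * u q + μ (ρ q) * (ρ q)⁻¹ * fderiv ℝ ρ q (0, 1)) _ z := hρu.add hA
  have e1 : pdt ρ z - pdx (fun q => μ (ρ q) / ρ q * pdx ρ q) z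
      + pdx (fun q => ρ q * v q) z = 0 := by
    rw [pdt_eq hρd, e1a, e1b, pdx_eq hA, pdx_eq hAB]
    simp only [ContinuousLinearMap.add_apply, ContinuousLinearMap.smul_apply, smul_eq_mul] at hM ⊢
    linarith [hM]
  refine ⟨e1, ?_⟩
  -- Second equation
  have hvV : v =ᶠ[nhds z] (fun q => u q + deriv φ (ρ q) * fderiv ℝ ρ q (0, 1)) := by
    filter_upwards [hEρx] with q hq
    rw [hv q, hq]
  have hV : HasFDerivAt (fun q => u q + deriv φ (ρ q) * fderiv ℝ ρ q (0, 1)) _ z := hud.add (hφρ.mul hFρ)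
  have hpdtv : pdt v z = fderiv ℝ u z (1, 0)
      + (deriv φ (ρ z) * fderiv ℝ (fderiv ℝ ρ) z (1, 0) (0, 1)
        + fderiv ℝ ρ z (0, 1) * (((deriv μ (ρ z) * (ρ z) ^ 2 - μ (ρ z) * (2 * ρ z)) / ((ρ z) ^ 2) ^ 2)
            * fderiv ℝ ρ z (1, 0))) := by
    rw [pdt_congr hvV, pdt_eq hV]
    simp
  have hpdxv : pdx v z = fderiv ℝ u z (0, 1)
      + (deriv φ (ρ z) * fderiv ℝ (fderiv ℝ ρ) z (0, 1) (0, 1)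
        + fderiv ℝ ρ z (0, 1) * (((deriv μ (ρ z) * (ρ z) ^ 2 - μ (ρ z) * (2 * ρ z)) / ((ρ z) ^ 2) ^ 2)
            * fderiv ℝ ρ z (0, 1))) := by
    rw [pdx_congr hvV, pdx_eq hV]
    simp
  have hrpow : HasFDerivAt (fun q => ρ q ^ γ) ((γ * ρ z ^ (γ - 1)) • fderiv ℝ ρ z) z :=
    (Real.hasDerivAt_rpow_const (Or.inl hr.ne')).comp_hasFDerivAt z hρd
  have hpdxpow : pdx (fun q => ρ q ^ γ) z = γ * ρ z ^ (γ - 1) * fderiv ℝ ρ z (0, 1) := by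
    rw [pdx_eq hrpow]
    simp [mul_assoc]
  -- momentum equation in scalar form at z
  have hρuu : HasFDerivAt (fun q => ρ q * (u q * u q)) _ z := hρd.mul (hud.mul hud)
  have hEuu : (fun q => ρ q * u q ^ 2) =ᶠ[nhds z] (fun q => ρ q * (u q * u q)) :=
    Filter.Eventually.of_forall (fun q => by ring)
  have hEμux : (fun q => μ (ρ q) * pdx u q) =ᶠ[nhds z]
      (fun q => μ (ρ q) * fderiv ℝ u q (0, 1)) := by
    filter_upwards [hEux] with q hq
    rw [hq]
  have hμFu : HasFDerivAt (fun q => μ (ρ q) * fderiv ℝ u q (0, 1)) _ z := hμρ.mul hFu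
  have hP : (ρ z * fderiv ℝ u z (1, 0) + u z * fderiv ℝ ρ z (1, 0))
      + (ρ z * (2 * u z * fderiv ℝ u z (0, 1)) + u z ^ 2 * fderiv ℝ ρ z (0, 1))
      - (μ (ρ z) * fderiv ℝ (fderiv ℝ u) z (0, 1) (0, 1)
          + fderiv ℝ u z (0, 1) * (deriv μ (ρ z) * fderiv ℝ ρ z (0, 1)))
      + γ * ρ z ^ (γ - 1) * fderiv ℝ ρ z (0, 1) = 0 := by
    have h0 := hmom z hz
    rw [pdt_eq hρu, pdx_congr hEuu, pdx_eq hρuu, pdx_congr hEμux, pdx_eq hμFu, hpdxpow] at h0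
    simp only [ContinuousLinearMap.add_apply, ContinuousLinearMap.smul_apply, smul_eq_mul,
      ContinuousLinearMap.coe_comp', Function.comp_apply, ContinuousLinearMap.apply_apply] at h0
    linear_combination h0
  -- x-derivative of the mass equation
  have hmassE : (fun q => fderiv ℝ ρ q (1, 0)
      + (ρ q * fderiv ℝ u q (0, 1) + u q * fderiv ℝ ρ q (0, 1))) =ᶠ[nhds z]
      (fun _ => (0 : ℝ)) := by
    filter_upwards [hzn] with q hq
    have hρdq : HasFDerivAt ρ (fderiv ℝ ρ q) q :=
      ((hρC.contDiffAt (hΩ.mem_nhds hq)).differentiableAt one_le).hasFDerivAt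
    have hudq : HasFDerivAt u (fderiv ℝ u q) q :=
      ((huC.contDiffAt (hΩ.mem_nhds hq)).differentiableAt one_le).hasFDerivAt
    have h0 := hmass q hq
    rw [pdt_eq hρdq, pdx_eq (f := fun q => ρ q * u q) (hρdq.mul hudq)] at h0
    simpa using h0
  have hW : HasFDerivAt (fun q => fderiv ℝ ρ q (1, 0) + (ρ q * fderiv ℝ u q (0, 1) + u q * fderiv ℝ ρ q (0, 1))) _ z :=
    hGρ.add ((hρd.mul hFu).add (hud.mul hFρ))
  have hMx : fderiv ℝ (fderiv ℝ ρ) z (1, 0) (0, 1)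
      + (ρ z * fderiv ℝ (fderiv ℝ u) z (0, 1) (0, 1) + fderiv ℝ u z (0, 1) * fderiv ℝ ρ z (0, 1)
        + (u z * fderiv ℝ (fderiv ℝ ρ) z (0, 1) (0, 1)
          + fderiv ℝ ρ z (0, 1) * fderiv ℝ u z (0, 1))) = 0 := by
    have h0 : pdx (fun q => fderiv ℝ ρ q (1, 0)
        + (ρ q * fderiv ℝ u q (0, 1) + u q * fderiv ℝ ρ q (0, 1))) z = 0 := by
      rw [pdx_congr hmassE]
      simp [pdx]
    rw [pdx_eq hW] at h0
    simp only [ContinuousLinearMap.add_apply, ContinuousLinearMap.smul_apply, smul_eq_mul,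
      ContinuousLinearMap.coe_comp', Function.comp_apply, ContinuousLinearMap.apply_apply] at h0
    linarith [h0, hsym]
  -- eliminate time derivatives
  have hrt : fderiv ℝ ρ z (1, 0)
      = -(ρ z * fderiv ℝ u z (0, 1) + u z * fderiv ℝ ρ z (0, 1)) := by linarith [hM]
  have hrtx : fderiv ℝ (fderiv ℝ ρ) z (1, 0) (0, 1)
      = -(ρ z * fderiv ℝ (fderiv ℝ u) z (0, 1) (0, 1)
          + 2 * fderiv ℝ u z (0, 1) * fderiv ℝ ρ z (0, 1)
          + u z * fderiv ℝ (fderiv ℝ ρ) z (0, 1) (0, 1)) := by linarith [hMx]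
  have hut : ρ z * fderiv ℝ u z (1, 0)
      = -(ρ z * u z * fderiv ℝ u z (0, 1)) + deriv μ (ρ z) * fderiv ℝ ρ z (0, 1) * fderiv ℝ u z (0, 1)
        + μ (ρ z) * fderiv ℝ (fderiv ℝ u) z (0, 1) (0, 1)
        - γ * ρ z ^ (γ - 1) * fderiv ℝ ρ z (0, 1) := by
    linear_combination hP - u z * hM
  rw [hpdtv, hpdxv, hpdxpow, hφ' (ρ z) hr, hrt, hrtx]
  field_simp
  linear_combination (ρ z) ^ 2 * hut
end

section
/- Let α ∈ ℝ, Ω ⊆ ℝ² open, ρ : Ω → ℝ twice continuously differentiable with ρ > 0 on Ω, and v : Ω → ℝ continuously differentiable, such that on Ω: ∂_t ρ − ∂_x(ρ^{α−1} ∂_x ρ) + ∂_x(ρ v) = 0. Then on Ω the reciprocal density satisfies ∂_t(1/ρ) − ∂_x(ρ^{α−1} ∂_x(1/ρ)) + 2 ρ^α (∂_x(1/ρ))² + 2 v ∂_x(1/ρ) − ∂_x(v/ρ) = 0. -/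
open Real Set

theorem stmt_2 (α : ℝ) (Ω : Set (ℝ × ℝ)) (ρ v : ℝ × ℝ → ℝ)
    (hΩ : IsOpen Ω)
    (hρC : ContDiffOn ℝ 2 ρ Ω) (hvC : ContDiffOn ℝ 1 v Ω)
    (hρpos : ∀ z ∈ Ω, 0 < ρ z)
    (hmass : ∀ z ∈ Ω,
      pdt ρ z - pdx (fun q => ρ q ^ (α - 1) * pdx ρ q) z
        + pdx (fun q => ρ q * v q) z = 0) :
    ∀ z ∈ Ω,
      pdt (fun q => (ρ q)⁻¹) z
        - pdx (fun q => ρ q ^ (α - 1) * pdx (fun r => (ρ r)⁻¹) q) z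
        + 2 * ρ z ^ α * (pdx (fun q => (ρ q)⁻¹) z) ^ 2
        + 2 * v z * pdx (fun q => (ρ q)⁻¹) z
        - pdx (fun q => v q / ρ q) z = 0 := by
  intro z hz
  obtain ⟨a, b⟩ := z
  have hI : IsOpen {y : ℝ | (a, y) ∈ Ω} := hΩ.preimage (by fun_prop)
  have hb : b ∈ {y : ℝ | (a, y) ∈ Ω} := hz
  set I := {y : ℝ | (a, y) ∈ Ω} with hIdef
  -- regularity of the spatial slice of ρ
  have hgI : ContDiffOn ℝ 2 (fun y => ρ (a, y)) I := by
    intro y hy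
    exact ((hρC.contDiffAt (hΩ.mem_nhds hy)).comp y
      (ContDiffAt.prodMk contDiffAt_const contDiffAt_id)).contDiffWithinAt
  have hpos : ∀ y ∈ I, 0 < ρ (a, y) := fun y hy => hρpos _ hy
  have hne : ρ (a, b) ≠ 0 := (hpos b hb).ne'
  have hG : ∀ y ∈ I, HasDerivAt (fun t => ρ (a, t)) (deriv (fun t => ρ (a, t)) y) y := by
    intro y hy
    exact (((hgI.differentiableOn (by norm_num)).differentiableAt
      (hI.mem_nhds hy))).hasDerivAt
  have hGd : DifferentiableAt ℝ (deriv (fun t => ρ (a, t))) b := by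
    have := hgI.deriv_of_isOpen (m := 1) hI le_rfl
    exact (this.differentiableOn (by norm_num)).differentiableAt (hI.mem_nhds hb)
  have hw : HasDerivAt (fun t => v (a, t)) (deriv (fun t => v (a, t)) b) b := by
    have hwI : ContDiffOn ℝ 1 (fun y => v (a, y)) I := by
      intro y hy
      exact ((hvC.contDiffAt (hΩ.mem_nhds hy)).comp y
        (ContDiffAt.prodMk contDiffAt_const contDiffAt_id)).contDiffWithinAt
    exact ((hwI.differentiableOn (by norm_num)).differentiableAt (hI.mem_nhds hb)).hasDerivAt
  have htf : HasDerivAt (fun s => ρ (s, b)) (deriv (fun s => ρ (s, b)) a) a := by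
    have : ContDiffAt ℝ 2 (fun s => ρ (s, b)) a :=
      (hρC.contDiffAt (hΩ.mem_nhds hz)).comp a (ContDiffAt.prodMk contDiffAt_id contDiffAt_const)
    exact (this.differentiableAt (by norm_num)).hasDerivAt
  -- notations for the various derivative values
  set Gb := deriv (fun t => ρ (a, t)) b with hGb
  set Wb := deriv (fun t => v (a, t)) b with hWb
  set Tb := deriv (fun s => ρ (s, b)) a with hTb
  set Pψ := deriv (fun y => ρ (a, y) ^ (α - 1) * deriv (fun t => ρ (a, t)) y) b with hPψ
  -- derivative of reciprocal in space
  have E2 : deriv (fun y => (ρ (a, y))⁻¹) b = -Gb / ρ (a, b) ^ 2 :=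
    ((hG b hb).inv hne).deriv
  -- derivative of reciprocal in time
  have E1 : deriv (fun s => (ρ (s, b))⁻¹) a = -Tb / ρ (a, b) ^ 2 :=
    (htf.inv hne).deriv
  -- eventual equality for the viscosity term
  have h_ev : (fun y => ρ (a, y) ^ (α - 1) * deriv (fun t => (ρ (a, t))⁻¹) y)
      =ᶠ[nhds b] fun y => -((ρ (a, y) ^ 2)⁻¹) * (ρ (a, y) ^ (α - 1) * deriv (fun t => ρ (a, t)) y) := by
    filter_upwards [hI.mem_nhds hb] with y hy
    rw [show deriv (fun t => (ρ (a, t))⁻¹) y = _ from ((hG y hy).inv (hpos y hy).ne').deriv]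
    generalize ρ (a, y) ^ (α - 1) = A
    field_simp
  have hψ : HasDerivAt (fun y => ρ (a, y) ^ (α - 1) * deriv (fun t => ρ (a, t)) y) Pψ b := by
    have : DifferentiableAt ℝ (fun y => ρ (a, y) ^ (α - 1) * deriv (fun t => ρ (a, t)) y) b :=
      (((hG b hb).rpow_const (Or.inl hne)).differentiableAt).mul hGd
    exact this.hasDerivAt
  have hu : HasDerivAt (fun y => -((ρ (a, y) ^ 2)⁻¹))
      (-(-(2 * ρ (a, b) ^ 1 * Gb) / (ρ (a, b) ^ 2) ^ 2)) b := by
    exact (((hG b hb).pow 2).inv (pow_ne_zero 2 hne)).neg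
  have E3 : deriv (fun y => ρ (a, y) ^ (α - 1) * deriv (fun t => (ρ (a, t))⁻¹) y) b
      = -(-(2 * ρ (a, b) ^ 1 * Gb) / (ρ (a, b) ^ 2) ^ 2) * (ρ (a, b) ^ (α - 1) * Gb)
        + -((ρ (a, b) ^ 2)⁻¹) * Pψ := by
    rw [h_ev.deriv_eq]
    exact (hu.mul hψ).deriv
  have E5 : deriv (fun y => ρ (a, y) * v (a, y)) b = Gb * v (a, b) + ρ (a, b) * Wb :=
    ((hG b hb).mul hw).deriv
  have E6 : deriv (fun y => v (a, y) / ρ (a, y)) b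
      = (Wb * ρ (a, b) - v (a, b) * Gb) / ρ (a, b) ^ 2 :=
    (hw.div (hG b hb) hne).deriv
  have hmass' : Tb - Pψ + (Gb * v (a, b) + ρ (a, b) * Wb) = 0 := by
    have := hmass (a, b) hz
    simp only [pdt, pdx] at this
    rw [E5] at this
    exact this
  simp only [pdt, pdx]
  rw [E1, E2, E3, E6]
  have hα : ρ (a, b) ^ α = ρ (a, b) ^ (α - 1) * ρ (a, b) := by
    rw [← Real.rpow_add_one hne (α - 1)]
    ring_nf
  rw [hα]
  generalize ρ (a, b) ^ (α - 1) = A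
  have hT : Tb = Pψ - (Gb * v (a, b) + ρ (a, b) * Wb) := by linarith [hmass']
  rw [hT]
  field_simp
  ring
end

section
/- Let μ : (0,∞) → ℝ be twice continuously differentiable, φ : (0,∞) → ℝ with φ'(s) = μ(s)/s² for all s > 0, and γ > 1. Let Ω ⊆ ℝ² be open and ρ, u : Ω → ℝ twice continuously differentiable with ρ > 0 on Ω, satisfying ∂_t ρ + ∂_x(ρu) = 0 and ∂_t(ρu) + ∂_x(ρu²) − ∂_x(μ(ρ)∂_x u) + ∂_x(ρ^γ) = 0 on Ω. Set v = u + φ'(ρ)∂_x ρ. Then the local BD-entropy identity holds on Ω: ∂_t( (1/2)ρv² + ρ^γ/(γ−1) ) + ∂_x( (1/2)ρ u v² + (γ/(γ−1))ρ^γ u ) + γ ρ^{γ−1} φ'(ρ) (∂_x ρ)² = 0. -/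
open Real Set

open Filter Topology

private lemma hasDerivAt_slice_t {f : ℝ × ℝ → ℝ} {t x : ℝ} (hf : DifferentiableAt ℝ f (t, x)) :
    HasDerivAt (fun s => f (s, x)) (fderiv ℝ f (t, x) (1, 0)) t :=
  hf.hasFDerivAt.comp_hasDerivAt t (HasDerivAt.prodMk (hasDerivAt_id t) (hasDerivAt_const t x))

private lemma hasDerivAt_slice_x {f : ℝ × ℝ → ℝ} {t x : ℝ} (hf : DifferentiableAt ℝ f (t, x)) :
    HasDerivAt (fun y => f (t, y)) (fderiv ℝ f (t, x) (0, 1)) x :=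
  hf.hasFDerivAt.comp_hasDerivAt x (HasDerivAt.prodMk (hasDerivAt_const x t) (hasDerivAt_id x))

private lemma pdt_eq_s4 {f : ℝ × ℝ → ℝ} {t x : ℝ} (hf : DifferentiableAt ℝ f (t, x)) :
    pdt f (t, x) = fderiv ℝ f (t, x) (1, 0) := (hasDerivAt_slice_t hf).deriv

private lemma pdx_eq_s4 {f : ℝ × ℝ → ℝ} {t x : ℝ} (hf : DifferentiableAt ℝ f (t, x)) :
    pdx f (t, x) = fderiv ℝ f (t, x) (0, 1) := (hasDerivAt_slice_x hf).deriv

private lemma eventually_diff {f : ℝ × ℝ → ℝ} {w : ℝ × ℝ} (hf : ContDiffAt ℝ 2 f w) :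
    ∀ᶠ q in 𝓝 w, DifferentiableAt ℝ f q := by
  filter_upwards [hf.eventually (by norm_num)] with q hq
  exact hq.differentiableAt (by norm_num)

private lemma hasDerivAt_pdx_slice_t {f : ℝ × ℝ → ℝ} {t x : ℝ} (hf : ContDiffAt ℝ 2 f (t, x)) :
    HasDerivAt (fun s => pdx f (s, x)) (fderiv ℝ (fderiv ℝ f) (t, x) (1, 0) (0, 1)) t := by
  have hd : DifferentiableAt ℝ (fderiv ℝ f) (t, x) :=
    (hf.fderiv_right (m := 1) (by norm_num)).differentiableAt one_ne_zero
  have h1 : HasDerivAt (fun s => fderiv ℝ f (s, x)) (fderiv ℝ (fderiv ℝ f) (t, x) (1, 0)) t :=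
    hd.hasFDerivAt.comp_hasDerivAt t (HasDerivAt.prodMk (hasDerivAt_id t) (hasDerivAt_const t x))
  have h2 := h1.clm_apply (hasDerivAt_const t ((0 : ℝ), (1 : ℝ)))
  simp only [map_zero, add_zero] at h2
  refine h2.congr_of_eventuallyEq ?_
  have htd : Filter.Tendsto (fun s : ℝ => (s, x)) (𝓝 t) (𝓝 (t, x)) :=
    (continuous_id.prodMk continuous_const).tendsto' t (t, x) rfl
  filter_upwards [htd.eventually (eventually_diff hf)] with s hs
  exact pdx_eq_s4 hs

private lemma hasDerivAt_pdx_slice_x {f : ℝ × ℝ → ℝ} {t x : ℝ} (hf : ContDiffAt ℝ 2 f (t, x)) :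
    HasDerivAt (fun y => pdx f (t, y)) (fderiv ℝ (fderiv ℝ f) (t, x) (0, 1) (0, 1)) x := by
  have hd : DifferentiableAt ℝ (fderiv ℝ f) (t, x) :=
    (hf.fderiv_right (m := 1) (by norm_num)).differentiableAt one_ne_zero
  have h1 : HasDerivAt (fun y => fderiv ℝ f (t, y)) (fderiv ℝ (fderiv ℝ f) (t, x) (0, 1)) x :=
    hd.hasFDerivAt.comp_hasDerivAt x (HasDerivAt.prodMk (hasDerivAt_const x t) (hasDerivAt_id x))
  have h2 := h1.clm_apply (hasDerivAt_const x ((0 : ℝ), (1 : ℝ)))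
  simp only [map_zero, add_zero] at h2
  refine h2.congr_of_eventuallyEq ?_
  have htd : Filter.Tendsto (fun y : ℝ => (t, y)) (𝓝 x) (𝓝 (t, x)) :=
    (continuous_const.prodMk continuous_id).tendsto' x (t, x) rfl
  filter_upwards [htd.eventually (eventually_diff hf)] with y hy
  exact pdx_eq_s4 hy

private lemma hasDerivAt_pdt_slice_x {f : ℝ × ℝ → ℝ} {t x : ℝ} (hf : ContDiffAt ℝ 2 f (t, x)) :
    HasDerivAt (fun y => pdt f (t, y)) (fderiv ℝ (fderiv ℝ f) (t, x) (0, 1) (1, 0)) x := by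
  have hd : DifferentiableAt ℝ (fderiv ℝ f) (t, x) :=
    (hf.fderiv_right (m := 1) (by norm_num)).differentiableAt one_ne_zero
  have h1 : HasDerivAt (fun y => fderiv ℝ f (t, y)) (fderiv ℝ (fderiv ℝ f) (t, x) (0, 1)) x :=
    hd.hasFDerivAt.comp_hasDerivAt x (HasDerivAt.prodMk (hasDerivAt_const x t) (hasDerivAt_id x))
  have h2 := h1.clm_apply (hasDerivAt_const x ((1 : ℝ), (0 : ℝ)))
  simp only [map_zero, add_zero] at h2
  refine h2.congr_of_eventuallyEq ?_
  have htd : Filter.Tendsto (fun y : ℝ => (t, y)) (𝓝 x) (𝓝 (t, x)) :=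
    (continuous_const.prodMk continuous_id).tendsto' x (t, x) rfl
  filter_upwards [htd.eventually (eventually_diff hf)] with y hy
  exact pdt_eq_s4 hy

private lemma bd_algebra (γ a b rt rx ut ux rtx rxx uxx m m' g : ℝ)
    (ha : a ≠ 0) (hg1 : γ - 1 ≠ 0)
    (hM : rt + (rx * b + a * ux) = 0)
    (hMx : rtx + (rxx * b + rx * ux + (rx * ux + a * uxx)) = 0)
    (hP : rt * b + a * ut + (rx * b ^ 2 + a * (2 * b * ux)) - (m' * rx * ux + m * uxx)
        + γ * g * rx = 0) :
    1 / 2 * rt * (b + m / a ^ 2 * rx) ^ 2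
      + a * (b + m / a ^ 2 * rx)
        * (ut + ((m' * a ^ 2 - m * (2 * a)) / (a ^ 2) ^ 2 * rt * rx + m / a ^ 2 * rtx))
      + γ * g * rt / (γ - 1)
      + ((1 / 2 * rx * b + 1 / 2 * a * ux) * (b + m / a ^ 2 * rx) ^ 2
        + a * b * (b + m / a ^ 2 * rx)
          * (ux + ((m' * a ^ 2 - m * (2 * a)) / (a ^ 2) ^ 2 * rx * rx + m / a ^ 2 * rxx))
        + (γ / (γ - 1) * (γ * g * rx) * b + γ / (γ - 1) * (g * a) * ux))
      + γ * g * (m / a ^ 2) * rx ^ 2 = 0 := by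
  have h1 : rt = -(rx * b + a * ux) := by linarith
  subst h1
  have h2 : rtx = -(rxx * b + rx * ux + (rx * ux + a * uxx)) := by linarith
  subst h2
  have h3 : ut = (m' * rx * ux + m * uxx - γ * g * rx - rx * b ^ 2 - 2 * a * b * ux
      + (rx * b + a * ux) * b) / a := by
    field_simp
    linear_combination hP
  subst h3
  field_simp
  ring

theorem stmt_4 (μ φ : ℝ → ℝ) (γ : ℝ) (Ω : Set (ℝ × ℝ)) (ρ u v : ℝ × ℝ → ℝ)
    (hμ : ContDiffOn ℝ 2 μ (Set.Ioi 0))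
    (hφ : ∀ s : ℝ, 0 < s → HasDerivAt φ (μ s / s ^ 2) s)
    (hγ : 1 < γ) (hΩ : IsOpen Ω)
    (hρC : ContDiffOn ℝ 2 ρ Ω) (huC : ContDiffOn ℝ 2 u Ω)
    (hρpos : ∀ z ∈ Ω, 0 < ρ z)
    (hmass : ∀ z ∈ Ω, pdt ρ z + pdx (fun q => ρ q * u q) z = 0)
    (hmom : ∀ z ∈ Ω,
      pdt (fun q => ρ q * u q) z + pdx (fun q => ρ q * u q ^ 2) z
        - pdx (fun q => μ (ρ q) * pdx u q) z + pdx (fun q => ρ q ^ γ) z = 0)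
    (hv : ∀ q, v q = u q + deriv φ (ρ q) * pdx ρ q) :
    ∀ z ∈ Ω,
      pdt (fun q => (1 / 2) * ρ q * v q ^ 2 + ρ q ^ γ / (γ - 1)) z
        + pdx (fun q => (1 / 2) * ρ q * u q * v q ^ 2 + (γ / (γ - 1)) * ρ q ^ γ * u q) z
        + γ * ρ z ^ (γ - 1) * deriv φ (ρ z) * (pdx ρ z) ^ 2 = 0 := by
  have hφd : ∀ s : ℝ, 0 < s → deriv φ s = μ s / s ^ 2 := fun s hs => (hφ s hs).deriv
  have hγ1 : γ - 1 ≠ 0 := sub_ne_zero.mpr (ne_of_gt hγ)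
  intro z hz
  obtain ⟨t0, x0⟩ := z
  have hΩn : Ω ∈ 𝓝 (t0, x0) := hΩ.mem_nhds hz
  have hρz : ContDiffAt ℝ 2 ρ (t0, x0) := hρC.contDiffAt hΩn
  have huz : ContDiffAt ℝ 2 u (t0, x0) := huC.contDiffAt hΩn
  have hρd : DifferentiableAt ℝ ρ (t0, x0) := hρz.differentiableAt (by norm_num)
  have hud : DifferentiableAt ℝ u (t0, x0) := huz.differentiableAt (by norm_num)
  have ha : 0 < ρ (t0, x0) := hρpos _ hz
  -- first order slice derivatives
  have Hρt : HasDerivAt (fun s => ρ (s, x0)) (fderiv ℝ ρ (t0, x0) (1, 0)) t0 :=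
    hasDerivAt_slice_t hρd
  have Hρx : HasDerivAt (fun y => ρ (t0, y)) (fderiv ℝ ρ (t0, x0) (0, 1)) x0 :=
    hasDerivAt_slice_x hρd
  have Hut : HasDerivAt (fun s => u (s, x0)) (fderiv ℝ u (t0, x0) (1, 0)) t0 :=
    hasDerivAt_slice_t hud
  have Hux : HasDerivAt (fun y => u (t0, y)) (fderiv ℝ u (t0, x0) (0, 1)) x0 :=
    hasDerivAt_slice_x hud
  -- second order slice derivatives
  have Hrtx : HasDerivAt (fun s => deriv (fun y => ρ (s, y)) x0)
      (fderiv ℝ (fderiv ℝ ρ) (t0, x0) (1, 0) (0, 1)) t0 := hasDerivAt_pdx_slice_t hρz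
  have Hrxx : HasDerivAt (fun y => deriv (fun y' => ρ (t0, y')) y)
      (fderiv ℝ (fderiv ℝ ρ) (t0, x0) (0, 1) (0, 1)) x0 := hasDerivAt_pdx_slice_x hρz
  have Hrxt : HasDerivAt (fun y => deriv (fun s => ρ (s, y)) t0)
      (fderiv ℝ (fderiv ℝ ρ) (t0, x0) (0, 1) (1, 0)) x0 := hasDerivAt_pdt_slice_x hρz
  have Huxx : HasDerivAt (fun y => deriv (fun y' => u (t0, y')) y)
      (fderiv ℝ (fderiv ℝ u) (t0, x0) (0, 1) (0, 1)) x0 := hasDerivAt_pdx_slice_x huz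
  have hsym : fderiv ℝ (fderiv ℝ ρ) (t0, x0) (0, 1) (1, 0)
      = fderiv ℝ (fderiv ℝ ρ) (t0, x0) (1, 0) (0, 1) := hρz.isSymmSndFDerivAt (by norm_num) _ _
  -- viscosity coefficient
  have hμz : ContDiffAt ℝ 2 μ (ρ (t0, x0)) := hμ.contDiffAt (Ioi_mem_nhds ha)
  have hμd : HasDerivAt μ (deriv μ (ρ (t0, x0))) (ρ (t0, x0)) :=
    (hμz.differentiableAt (by norm_num)).hasDerivAt
  have Hψ := hμd.div (hasDerivAt_pow 2 (ρ (t0, x0))) (pow_ne_zero 2 (ne_of_gt ha))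
  have Hψρt : HasDerivAt (fun s => μ (ρ (s, x0)) / ρ (s, x0) ^ 2)
      ((deriv μ (ρ (t0, x0)) * ρ (t0, x0) ^ 2
        - μ (ρ (t0, x0)) * (↑(2 : ℕ) * ρ (t0, x0) ^ (2 - 1))) / (ρ (t0, x0) ^ 2) ^ 2
        * fderiv ℝ ρ (t0, x0) (1, 0)) t0 := by have h := Hψ.comp t0 Hρt; exact h
  have Hψρx : HasDerivAt (fun y => μ (ρ (t0, y)) / ρ (t0, y) ^ 2)
      ((deriv μ (ρ (t0, x0)) * ρ (t0, x0) ^ 2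
        - μ (ρ (t0, x0)) * (↑(2 : ℕ) * ρ (t0, x0) ^ (2 - 1))) / (ρ (t0, x0) ^ 2) ^ 2
        * fderiv ℝ ρ (t0, x0) (0, 1)) x0 := by have h := Hψ.comp x0 Hρx; exact h
  have Hrpt : HasDerivAt (fun s => ρ (s, x0) ^ γ)
      (γ * ρ (t0, x0) ^ (γ - 1) * fderiv ℝ ρ (t0, x0) (1, 0)) t0 :=
    by have h := (Real.hasDerivAt_rpow_const (p := γ) (Or.inl (ne_of_gt ha))).comp t0 Hρt; exact h
  have Hrpx : HasDerivAt (fun y => ρ (t0, y) ^ γ)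
      (γ * ρ (t0, x0) ^ (γ - 1) * fderiv ℝ ρ (t0, x0) (0, 1)) x0 :=
    by have h := (Real.hasDerivAt_rpow_const (p := γ) (Or.inl (ne_of_gt ha))).comp x0 Hρx; exact h
  -- neighborhoods
  have hmemt : ∀ᶠ s in 𝓝 t0, (s, x0) ∈ Ω :=
    ((continuous_id.prodMk continuous_const).tendsto' t0 (t0, x0) rfl).eventually hΩn
  have hmemx : ∀ᶠ y in 𝓝 x0, (t0, y) ∈ Ω :=
    ((continuous_const.prodMk continuous_id).tendsto' x0 (t0, x0) rfl).eventually hΩn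
  have hdiffx : ∀ᶠ y in 𝓝 x0, DifferentiableAt ℝ ρ (t0, y) ∧ DifferentiableAt ℝ u (t0, y) :=
    ((continuous_const.prodMk continuous_id).tendsto' x0 (t0, x0) rfl).eventually
      ((eventually_diff hρz).and (eventually_diff huz))
  -- energy time derivative
  obtain ⟨V1, E1, hV1⟩ : ∃ V, HasDerivAt (fun s => 1 / 2 * ρ (s, x0) *
        (u (s, x0) + μ (ρ (s, x0)) / ρ (s, x0) ^ 2 * deriv (fun y => ρ (s, y)) x0) ^ 2
        + ρ (s, x0) ^ γ / (γ - 1)) V t0 ∧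
      V = 1 / 2 * fderiv ℝ ρ (t0, x0) (1, 0)
            * (u (t0, x0) + μ (ρ (t0, x0)) / ρ (t0, x0) ^ 2 * deriv (fun y => ρ (t0, y)) x0) ^ 2
          + ρ (t0, x0)
            * (u (t0, x0) + μ (ρ (t0, x0)) / ρ (t0, x0) ^ 2 * deriv (fun y => ρ (t0, y)) x0)
            * (fderiv ℝ u (t0, x0) (1, 0)
              + ((deriv μ (ρ (t0, x0)) * ρ (t0, x0) ^ 2 - μ (ρ (t0, x0)) * (2 * ρ (t0, x0)))
                    / (ρ (t0, x0) ^ 2) ^ 2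
                  * fderiv ℝ ρ (t0, x0) (1, 0) * deriv (fun y => ρ (t0, y)) x0
                + μ (ρ (t0, x0)) / ρ (t0, x0) ^ 2 * fderiv ℝ (fderiv ℝ ρ) (t0, x0) (1, 0) (0, 1)))
          + γ * ρ (t0, x0) ^ (γ - 1) * fderiv ℝ ρ (t0, x0) (1, 0) / (γ - 1) := by
    refine ⟨_, ((Hρt.const_mul (1 / 2 : ℝ)).mul
      ((Hut.add (Hψρt.mul Hrtx)).pow 2)).add (Hrpt.div_const (γ - 1)), ?_⟩
    simp only [Pi.pow_apply, Pi.add_apply, Pi.mul_apply]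
    push_cast
    ring
  have E1' : HasDerivAt (fun s => 1 / 2 * ρ (s, x0) * v (s, x0) ^ 2
      + ρ (s, x0) ^ γ / (γ - 1)) V1 t0 := by
    refine E1.congr_of_eventuallyEq ?_
    filter_upwards [hmemt] with s hs
    rw [hv (s, x0), hφd _ (hρpos _ hs)]
    rfl
  -- flux space derivative
  obtain ⟨V2, E2, hV2⟩ : ∃ V, HasDerivAt (fun y => 1 / 2 * ρ (t0, y) * u (t0, y) *
        (u (t0, y) + μ (ρ (t0, y)) / ρ (t0, y) ^ 2 * deriv (fun y' => ρ (t0, y')) y) ^ 2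
        + γ / (γ - 1) * ρ (t0, y) ^ γ * u (t0, y)) V x0 ∧
      V = (1 / 2 * fderiv ℝ ρ (t0, x0) (0, 1) * u (t0, x0)
            + 1 / 2 * ρ (t0, x0) * fderiv ℝ u (t0, x0) (0, 1))
            * (u (t0, x0) + μ (ρ (t0, x0)) / ρ (t0, x0) ^ 2 * deriv (fun y => ρ (t0, y)) x0) ^ 2
          + ρ (t0, x0) * u (t0, x0)
            * (u (t0, x0) + μ (ρ (t0, x0)) / ρ (t0, x0) ^ 2 * deriv (fun y => ρ (t0, y)) x0)
            * (fderiv ℝ u (t0, x0) (0, 1)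
              + ((deriv μ (ρ (t0, x0)) * ρ (t0, x0) ^ 2 - μ (ρ (t0, x0)) * (2 * ρ (t0, x0)))
                    / (ρ (t0, x0) ^ 2) ^ 2
                  * fderiv ℝ ρ (t0, x0) (0, 1) * deriv (fun y => ρ (t0, y)) x0
                + μ (ρ (t0, x0)) / ρ (t0, x0) ^ 2 * fderiv ℝ (fderiv ℝ ρ) (t0, x0) (0, 1) (0, 1)))
          + (γ / (γ - 1) * (γ * ρ (t0, x0) ^ (γ - 1) * fderiv ℝ ρ (t0, x0) (0, 1)) * u (t0, x0)
            + γ / (γ - 1) * ρ (t0, x0) ^ γ * fderiv ℝ u (t0, x0) (0, 1)) := by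
    refine ⟨_, (((Hρx.const_mul (1 / 2 : ℝ)).mul Hux).mul
      ((Hux.add (Hψρx.mul Hrxx)).pow 2)).add ((Hrpx.const_mul (γ / (γ - 1))).mul Hux), ?_⟩
    simp only [Pi.pow_apply, Pi.add_apply, Pi.mul_apply]
    push_cast
    ring
  have E2' : HasDerivAt (fun y => 1 / 2 * ρ (t0, y) * u (t0, y) * v (t0, y) ^ 2
      + γ / (γ - 1) * ρ (t0, y) ^ γ * u (t0, y)) V2 x0 := by
    refine E2.congr_of_eventuallyEq ?_
    filter_upwards [hmemx] with y hy
    rw [hv (t0, y), hφd _ (hρpos _ hy)]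
    rfl
  -- mass equation at the point
  have hmassz := hmass (t0, x0) hz
  simp only [pdt, pdx] at hmassz
  have HM1 : HasDerivAt (fun y => ρ (t0, y) * u (t0, y))
      (fderiv ℝ ρ (t0, x0) (0, 1) * u (t0, x0) + ρ (t0, x0) * fderiv ℝ u (t0, x0) (0, 1)) x0 :=
    Hρx.mul Hux
  rw [Hρt.deriv, HM1.deriv] at hmassz
  -- momentum equation at the point
  have hmomz := hmom (t0, x0) hz
  simp only [pdt, pdx] at hmomz
  have HA : HasDerivAt (fun s => ρ (s, x0) * u (s, x0))
      (fderiv ℝ ρ (t0, x0) (1, 0) * u (t0, x0) + ρ (t0, x0) * fderiv ℝ u (t0, x0) (1, 0)) t0 :=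
    Hρt.mul Hut
  obtain ⟨VB, HB, hVB⟩ : ∃ V, HasDerivAt (fun y => ρ (t0, y) * u (t0, y) ^ 2) V x0 ∧
      V = fderiv ℝ ρ (t0, x0) (0, 1) * u (t0, x0) ^ 2
        + ρ (t0, x0) * (2 * u (t0, x0) * fderiv ℝ u (t0, x0) (0, 1)) :=
    ⟨_, Hρx.mul (Hux.pow 2), by simp only [Pi.pow_apply]; push_cast; ring⟩
  have hμρx : HasDerivAt (fun y => μ (ρ (t0, y)))
      (deriv μ (ρ (t0, x0)) * fderiv ℝ ρ (t0, x0) (0, 1)) x0 := hμd.comp x0 Hρx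
  have HC : HasDerivAt (fun y => μ (ρ (t0, y)) * deriv (fun y' => u (t0, y')) y)
      (deriv μ (ρ (t0, x0)) * fderiv ℝ ρ (t0, x0) (0, 1) * deriv (fun y' => u (t0, y')) x0
        + μ (ρ (t0, x0)) * fderiv ℝ (fderiv ℝ u) (t0, x0) (0, 1) (0, 1)) x0 := hμρx.mul Huxx
  rw [HA.deriv, HB.deriv, hVB, HC.deriv, Hrpx.deriv, Hux.deriv] at hmomz
  -- x derivative of the mass equation
  have HMslice : HasDerivAt (fun y => deriv (fun y' => ρ (t0, y')) y * u (t0, y)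
      + ρ (t0, y) * deriv (fun y' => u (t0, y')) y)
      (fderiv ℝ (fderiv ℝ ρ) (t0, x0) (0, 1) (0, 1) * u (t0, x0)
        + deriv (fun y' => ρ (t0, y')) x0 * fderiv ℝ u (t0, x0) (0, 1)
        + (fderiv ℝ ρ (t0, x0) (0, 1) * deriv (fun y' => u (t0, y')) x0
          + ρ (t0, x0) * fderiv ℝ (fderiv ℝ u) (t0, x0) (0, 1) (0, 1))) x0 :=
    (Hrxx.mul Hux).add (Hρx.mul Huxx)
  have hevprod : (fun y => deriv (fun y' => ρ (t0, y') * u (t0, y')) y) =ᶠ[𝓝 x0]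
      (fun y => deriv (fun y' => ρ (t0, y')) y * u (t0, y)
        + ρ (t0, y) * deriv (fun y' => u (t0, y')) y) := by
    filter_upwards [hdiffx] with y hy
    rw [(hasDerivAt_slice_x hy.1).deriv, (hasDerivAt_slice_x hy.2).deriv]
    exact ((hasDerivAt_slice_x hy.1).mul (hasDerivAt_slice_x hy.2)).deriv
  have HMslice2 := HMslice.congr_of_eventuallyEq hevprod
  have HMx := Hrxt.add HMslice2
  have hzero : HasDerivAt (fun y => deriv (fun s => ρ (s, y)) t0
      + deriv (fun y' => ρ (t0, y') * u (t0, y')) y) 0 x0 := by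
    refine (hasDerivAt_const x0 (0 : ℝ)).congr_of_eventuallyEq ?_
    filter_upwards [hmemx] with y hy
    exact hmass (t0, y) hy
  have hMXraw := HMx.unique hzero
  rw [hsym, Hρx.deriv, Hux.deriv] at hMXraw
  -- canonical forms of the three equations
  have hM0 : fderiv ℝ ρ (t0, x0) (1, 0) + (fderiv ℝ ρ (t0, x0) (0, 1) * u (t0, x0)
      + ρ (t0, x0) * fderiv ℝ u (t0, x0) (0, 1)) = 0 := by linear_combination hmassz
  have hMx0 : fderiv ℝ (fderiv ℝ ρ) (t0, x0) (1, 0) (0, 1)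
      + (fderiv ℝ (fderiv ℝ ρ) (t0, x0) (0, 1) (0, 1) * u (t0, x0)
        + fderiv ℝ ρ (t0, x0) (0, 1) * fderiv ℝ u (t0, x0) (0, 1)
        + (fderiv ℝ ρ (t0, x0) (0, 1) * fderiv ℝ u (t0, x0) (0, 1)
          + ρ (t0, x0) * fderiv ℝ (fderiv ℝ u) (t0, x0) (0, 1) (0, 1))) = 0 := by
    linear_combination hMXraw
  have hP0 : fderiv ℝ ρ (t0, x0) (1, 0) * u (t0, x0) + ρ (t0, x0) * fderiv ℝ u (t0, x0) (1, 0)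
      + (fderiv ℝ ρ (t0, x0) (0, 1) * u (t0, x0) ^ 2
        + ρ (t0, x0) * (2 * u (t0, x0) * fderiv ℝ u (t0, x0) (0, 1)))
      - (deriv μ (ρ (t0, x0)) * fderiv ℝ ρ (t0, x0) (0, 1) * fderiv ℝ u (t0, x0) (0, 1)
        + μ (ρ (t0, x0)) * fderiv ℝ (fderiv ℝ u) (t0, x0) (0, 1) (0, 1))
      + γ * ρ (t0, x0) ^ (γ - 1) * fderiv ℝ ρ (t0, x0) (0, 1) = 0 := by
    linear_combination hmomz
  have hgg : ρ (t0, x0) ^ γ = ρ (t0, x0) ^ (γ - 1) * ρ (t0, x0) := by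
    have h21 : γ - 1 + 1 = γ := by ring
    conv_lhs => rw [← h21]
    rw [Real.rpow_add_one (ne_of_gt ha)]
  simp only [pdt, pdx]
  rw [E1'.deriv, hV1, E2'.deriv, hV2, hφd _ ha, hgg, Hρx.deriv]
  linear_combination bd_algebra γ (ρ (t0, x0)) (u (t0, x0))
    (fderiv ℝ ρ (t0, x0) (1, 0)) (fderiv ℝ ρ (t0, x0) (0, 1))
    (fderiv ℝ u (t0, x0) (1, 0)) (fderiv ℝ u (t0, x0) (0, 1))
    (fderiv ℝ (fderiv ℝ ρ) (t0, x0) (1, 0) (0, 1)) (fderiv ℝ (fderiv ℝ ρ) (t0, x0) (0, 1) (0, 1))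
    (fderiv ℝ (fderiv ℝ u) (t0, x0) (0, 1) (0, 1)) (μ (ρ (t0, x0))) (deriv μ (ρ (t0, x0)))
    (ρ (t0, x0) ^ (γ - 1)) (ne_of_gt ha) hγ1 hM0 hMx0 hP0
end

section
/- Let μ : (0,∞) → ℝ be twice continuously differentiable with μ(s) > 0 for all s > 0, φ : (0,∞) → ℝ with φ'(s) = μ(s)/s² for all s > 0, γ > 1, and p ≥ 0 a real number. Let Ω ⊆ ℝ² be open and ρ, u : Ω → ℝ twice continuously differentiable with ρ > 0 on Ω, satisfying ∂_t ρ + ∂_x(ρu) = 0 and ∂_t(ρu) + ∂_x(ρu²) − ∂_x(μ(ρ)∂_x u) + ∂_x(ρ^γ) = 0 on Ω. Set v = u + φ'(ρ)∂_x ρ. Then on Ω: ∂_t( ρ|v|^{p+2}/(p+2) ) + ∂_x( ρ u |v|^{p+2}/(p+2) ) + γ (ρ^{γ+1}/μ(ρ)) |v|^{p+2} = γ (ρ^{γ+1}/μ(ρ)) u v |v|^p. -/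
open Real Set Topology Filter

lemma hasDerivAt_slice1 {f : ℝ × ℝ → ℝ} {q : ℝ × ℝ} (hf : DifferentiableAt ℝ f q) :
    HasDerivAt (fun s => f (s, q.2)) (fderiv ℝ f q (1, 0)) q.1 :=
  hf.hasFDerivAt.comp_hasDerivAt q.1 (HasDerivAt.prodMk (hasDerivAt_id q.1) (hasDerivAt_const q.1 q.2))

lemma hasDerivAt_slice2 {f : ℝ × ℝ → ℝ} {q : ℝ × ℝ} (hf : DifferentiableAt ℝ f q) :
    HasDerivAt (fun y => f (q.1, y)) (fderiv ℝ f q (0, 1)) q.2 :=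
  hf.hasFDerivAt.comp_hasDerivAt q.2 (HasDerivAt.prodMk (hasDerivAt_const q.2 q.1) (hasDerivAt_id q.2))

lemma hasDerivAt_clm_slice1 {F : ℝ × ℝ → ((ℝ × ℝ) →L[ℝ] ℝ)} {z : ℝ × ℝ} (e : ℝ × ℝ)
    (hF : DifferentiableAt ℝ F z) :
    HasDerivAt (fun s => F (s, z.2) e) (fderiv ℝ F z (1, 0) e) z.1 := by
  have h := ((ContinuousLinearMap.apply ℝ ℝ e).hasFDerivAt.comp z hF.hasFDerivAt).comp_hasDerivAt
      z.1 (HasDerivAt.prodMk (hasDerivAt_id z.1) (hasDerivAt_const z.1 z.2))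
  exact h

lemma hasDerivAt_clm_slice2 {F : ℝ × ℝ → ((ℝ × ℝ) →L[ℝ] ℝ)} {z : ℝ × ℝ} (e : ℝ × ℝ)
    (hF : DifferentiableAt ℝ F z) :
    HasDerivAt (fun y => F (z.1, y) e) (fderiv ℝ F z (0, 1) e) z.2 := by
  have h := ((ContinuousLinearMap.apply ℝ ℝ e).hasFDerivAt.comp z hF.hasFDerivAt).comp_hasDerivAt
      z.2 (HasDerivAt.prodMk (hasDerivAt_const z.2 z.1) (hasDerivAt_id z.2))
  exact h

lemma abs_rpow_eq (q : ℝ) (t : ℝ) : (t ^ 2) ^ (q / 2) = |t| ^ q := by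
  rw [← sq_abs, ← Real.rpow_natCast |t| 2, ← Real.rpow_mul (abs_nonneg t)]
  norm_num
  congr 1
  ring

lemma abs_rpow_hasDerivAt (p : ℝ) (hp : 0 ≤ p) (t : ℝ) :
    HasDerivAt (fun t : ℝ => |t| ^ (p + 2)) ((p + 2) * |t| ^ p * t) t := by
  have h1 : HasDerivAt (fun s : ℝ => s ^ 2) (2 * t) t := by simpa using hasDerivAt_pow 2 t
  have key := (Real.hasDerivAt_rpow_const (p := (p + 2) / 2) (x := t ^ 2)
    (Or.inr (by linarith))).comp t h1
  have key2 : HasDerivAt (fun s : ℝ => (s ^ 2) ^ ((p + 2) / 2))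
      ((p + 2) / 2 * (t ^ 2) ^ ((p + 2) / 2 - 1) * (2 * t)) t := key
  have heq : (fun s : ℝ => (s ^ 2) ^ ((p + 2) / 2)) = fun s : ℝ => |s| ^ (p + 2) := by
    funext s; exact abs_rpow_eq (p + 2) s
  rw [heq] at key2
  convert key2 using 1
  rw [show (p + 2) / 2 - 1 = p / 2 by ring, abs_rpow_eq p t]
  ring

theorem stmt_6 (μ φ : ℝ → ℝ) (γ p : ℝ) (Ω : Set (ℝ × ℝ)) (ρ u v : ℝ × ℝ → ℝ)
    (hμ : ContDiffOn ℝ 2 μ (Set.Ioi 0))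
    (hμpos : ∀ s : ℝ, 0 < s → 0 < μ s)
    (hφ : ∀ s : ℝ, 0 < s → HasDerivAt φ (μ s / s ^ 2) s)
    (hγ : 1 < γ) (hp : 0 ≤ p) (hΩ : IsOpen Ω)
    (hρC : ContDiffOn ℝ 2 ρ Ω) (huC : ContDiffOn ℝ 2 u Ω)
    (hρpos : ∀ z ∈ Ω, 0 < ρ z)
    (hmass : ∀ z ∈ Ω, pdt ρ z + pdx (fun q => ρ q * u q) z = 0)
    (hmom : ∀ z ∈ Ω,
      pdt (fun q => ρ q * u q) z + pdx (fun q => ρ q * u q ^ 2) z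
        - pdx (fun q => μ (ρ q) * pdx u q) z + pdx (fun q => ρ q ^ γ) z = 0)
    (hv : ∀ q, v q = u q + deriv φ (ρ q) * pdx ρ q) :
    ∀ z ∈ Ω,
      pdt (fun q => ρ q * |v q| ^ (p + 2) / (p + 2)) z
        + pdx (fun q => ρ q * u q * |v q| ^ (p + 2) / (p + 2)) z
        + γ * (ρ z ^ (γ + 1) / μ (ρ z)) * |v z| ^ (p + 2)
        = γ * (ρ z ^ (γ + 1) / μ (ρ z)) * u z * v z * |v z| ^ p := by
  intro z hz
  have hzΩ : Ω ∈ 𝓝 z := hΩ.mem_nhds hz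
  have hr : 0 < ρ z := hρpos z hz
  have hrne : ρ z ≠ 0 := hr.ne'
  have hm : 0 < μ (ρ z) := hμpos _ hr
  have hmne : μ (ρ z) ≠ 0 := hm.ne'
  have hp2 : (p + 2) ≠ 0 := by linarith
  set w : ℝ × ℝ → ℝ := fun q => φ (ρ q) with hw
  -- basic differentiability
  have hρA : ∀ q ∈ Ω, ContDiffAt ℝ 2 ρ q := fun q hq => hρC.contDiffAt (hΩ.mem_nhds hq)
  have huA : ∀ q ∈ Ω, ContDiffAt ℝ 2 u q := fun q hq => huC.contDiffAt (hΩ.mem_nhds hq)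
  have hρd : ∀ q ∈ Ω, DifferentiableAt ℝ ρ q := fun q hq => (hρA q hq).differentiableAt two_ne_zero
  have hud : ∀ q ∈ Ω, DifferentiableAt ℝ u q := fun q hq => (huA q hq).differentiableAt two_ne_zero
  have hwd : ∀ q ∈ Ω, DifferentiableAt ℝ w q := fun q hq =>
    ((hφ _ (hρpos q hq)).differentiableAt).comp q (hρd q hq)
  -- φ is C² on Ioi 0
  have hφC : ContDiffOn ℝ 2 φ (Set.Ioi 0) := by
    rw [show (2 : WithTop ℕ∞) = 1 + 1 by norm_num, contDiffOn_succ_iff_deriv_of_isOpen isOpen_Ioi]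
    refine ⟨fun s hs => (hφ s hs).differentiableAt.differentiableWithinAt, by simp, ?_⟩
    have hden : ContDiffOn ℝ 1 (fun t : ℝ => t ^ 2) (Set.Ioi 0) :=
      (contDiff_id.pow 2).contDiffOn
    have hq : ContDiffOn ℝ 1 (fun t => μ t / t ^ 2) (Set.Ioi 0) :=
      (hμ.of_le one_le_two).div hden (fun t ht => pow_ne_zero 2 (ne_of_gt ht))
    exact hq.congr fun t ht => (hφ t ht).deriv
  have hwC : ContDiffAt ℝ 2 w z :=
    (hφC.contDiffAt (isOpen_Ioi.mem_nhds hr)).comp z (hρA z hz)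
  -- fderiv regularity
  have hDwd : DifferentiableAt ℝ (fderiv ℝ w) z :=
    (hwC.fderiv_right (le_refl 2)).differentiableAt one_ne_zero
  have hDρd : DifferentiableAt ℝ (fderiv ℝ ρ) z :=
    ((hρA z hz).fderiv_right (le_refl 2)).differentiableAt one_ne_zero
  have hDud : DifferentiableAt ℝ (fderiv ℝ u) z :=
    ((huA z hz).fderiv_right (le_refl 2)).differentiableAt one_ne_zero
  have hsymm : fderiv ℝ (fderiv ℝ w) z (1, 0) (0, 1) = fderiv ℝ (fderiv ℝ w) z (0, 1) (1, 0) :=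
    (hwC.isSymmSndFDerivAt (by simp)) _ _
  -- slice membership filters
  have hmemx : ∀ᶠ y in 𝓝 z.2, (z.1, y) ∈ Ω := by
    have ht : Filter.Tendsto (fun y : ℝ => (z.1, y)) (𝓝 z.2) (𝓝 z) := by
      rw [← @Prod.mk.eta _ _ z]
      exact (Continuous.prodMk_right z.1).tendsto z.2
    exact ht.eventually (hΩ.eventually_mem hz)
  have hmemt : ∀ᶠ s in 𝓝 z.1, (s, z.2) ∈ Ω := by
    have ht : Filter.Tendsto (fun s : ℝ => (s, z.2)) (𝓝 z.1) (𝓝 z) := by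
      rw [← @Prod.mk.eta _ _ z]
      exact ((continuous_id.prodMk continuous_const)).tendsto z.1
    exact ht.eventually (hΩ.eventually_mem hz)
  -- pointwise identities on Ω
  have hpdxρ : ∀ q ∈ Ω, pdx ρ q = fderiv ℝ ρ q (0, 1) := fun q hq =>
    (hasDerivAt_slice2 (hρd q hq)).deriv
  have hpdxu : ∀ q ∈ Ω, pdx u q = fderiv ℝ u q (0, 1) := fun q hq =>
    (hasDerivAt_slice2 (hud q hq)).deriv
  have hpdxw : ∀ q ∈ Ω, pdx w q = fderiv ℝ w q (0, 1) := fun q hq =>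
    (hasDerivAt_slice2 (hwd q hq)).deriv
  have hpdtw : ∀ q ∈ Ω, pdt w q = fderiv ℝ w q (1, 0) := fun q hq =>
    (hasDerivAt_slice1 (hwd q hq)).deriv
  -- chain rule for w in x
  have hX : ∀ q ∈ Ω, pdx w q = μ (ρ q) / ρ q ^ 2 * fderiv ℝ ρ q (0, 1) := by
    intro q hq
    exact ((hφ _ (hρpos q hq)).comp q.2 (hasDerivAt_slice2 (hρd q hq))).deriv
  -- v in terms of w
  have hveq : ∀ q ∈ Ω, v q = u q + fderiv ℝ w q (0, 1) := by
    intro q hq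
    rw [hv q, (hφ _ (hρpos q hq)).deriv, hpdxρ q hq, ← hX q hq, hpdxw q hq]
  -- mass equation expanded
  have hmass' : ∀ q ∈ Ω, pdt ρ q
      = -(fderiv ℝ ρ q (0, 1) * u q + ρ q * fderiv ℝ u q (0, 1)) := by
    intro q hq
    have h0 := hmass q hq
    have h1 : pdx (fun q => ρ q * u q) q
        = fderiv ℝ ρ q (0, 1) * u q + ρ q * fderiv ℝ u q (0, 1) :=
      ((hasDerivAt_slice2 (hρd q hq)).mul (hasDerivAt_slice2 (hud q hq))).deriv
    rw [h1] at h0; linarith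
  -- time equation for w
  have hT : ∀ q ∈ Ω, pdt w q = -(u q * (μ (ρ q) / ρ q ^ 2 * fderiv ℝ ρ q (0, 1))
      + μ (ρ q) * fderiv ℝ u q (0, 1) / ρ q) := by
    intro q hq
    have h1 : pdt w q = μ (ρ q) / ρ q ^ 2 * fderiv ℝ ρ q (1, 0) :=
      ((hφ _ (hρpos q hq)).comp q.1 (hasDerivAt_slice1 (hρd q hq))).deriv
    have h2 : fderiv ℝ ρ q (1, 0) = -(fderiv ℝ ρ q (0, 1) * u q + ρ q * fderiv ℝ u q (0, 1)) := by
      rw [← (hasDerivAt_slice1 (hρd q hq)).deriv]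
      exact hmass' q hq
    rw [h1, h2]
    have : ρ q ≠ 0 := (hρpos q hq).ne'
    field_simp
    -- derivative of μ
  have hμ' : HasDerivAt μ (deriv μ (ρ z)) (ρ z) :=
    ((hμ.contDiffAt (isOpen_Ioi.mem_nhds hr)).differentiableAt two_ne_zero).hasDerivAt
  -- slice derivatives at z
  have hSrx : HasDerivAt (fun y => ρ (z.1, y)) (fderiv ℝ ρ z (0, 1)) z.2 :=
    hasDerivAt_slice2 (hρd z hz)
  have hSrt : HasDerivAt (fun s => ρ (s, z.2)) (fderiv ℝ ρ z (1, 0)) z.1 :=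
    hasDerivAt_slice1 (hρd z hz)
  have hSux : HasDerivAt (fun y => u (z.1, y)) (fderiv ℝ u z (0, 1)) z.2 :=
    hasDerivAt_slice2 (hud z hz)
  have hSut : HasDerivAt (fun s => u (s, z.2)) (fderiv ℝ u z (1, 0)) z.1 :=
    hasDerivAt_slice1 (hud z hz)
  have hSmx : HasDerivAt (fun y => μ (ρ (z.1, y))) (deriv μ (ρ z) * fderiv ℝ ρ z (0, 1)) z.2 :=
    hμ'.comp z.2 hSrx
  have hSRx : HasDerivAt (fun y => fderiv ℝ ρ (z.1, y) (0, 1))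
      (fderiv ℝ (fderiv ℝ ρ) z (0, 1) (0, 1)) z.2 := hasDerivAt_clm_slice2 _ hDρd
  have hSUx : HasDerivAt (fun y => fderiv ℝ u (z.1, y) (0, 1))
      (fderiv ℝ (fderiv ℝ u) z (0, 1) (0, 1)) z.2 := hasDerivAt_clm_slice2 _ hDud
  have hSWxx : HasDerivAt (fun y => fderiv ℝ w (z.1, y) (0, 1))
      (fderiv ℝ (fderiv ℝ w) z (0, 1) (0, 1)) z.2 := hasDerivAt_clm_slice2 _ hDwd
  have hSWtx : HasDerivAt (fun y => fderiv ℝ w (z.1, y) (1, 0))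
      (fderiv ℝ (fderiv ℝ w) z (0, 1) (1, 0)) z.2 := hasDerivAt_clm_slice2 _ hDwd
  have hSWx1 : HasDerivAt (fun s => fderiv ℝ w (s, z.2) (0, 1))
      (fderiv ℝ (fderiv ℝ w) z (1, 0) (0, 1)) z.1 := hasDerivAt_clm_slice1 _ hDwd
  -- combinator: slice of μ(ρ)/ρ² * ∂ₓρ in x
  have hq1 : HasDerivAt (fun y => μ (ρ (z.1, y)) / ρ (z.1, y) ^ 2)
      ((deriv μ (ρ z) * fderiv ℝ ρ z (0, 1) * ρ z ^ 2
        - μ (ρ z) * ((2 : ℕ) * ρ z ^ (2 - 1) * fderiv ℝ ρ z (0, 1))) / (ρ z ^ 2) ^ 2) z.2 :=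
    hSmx.div (hSrx.pow 2) (pow_ne_zero 2 hrne)
  have hq2 : HasDerivAt (fun y => μ (ρ (z.1, y)) / ρ (z.1, y) ^ 2 * fderiv ℝ ρ (z.1, y) (0, 1))
      ((deriv μ (ρ z) * fderiv ℝ ρ z (0, 1) * ρ z ^ 2
        - μ (ρ z) * ((2 : ℕ) * ρ z ^ (2 - 1) * fderiv ℝ ρ z (0, 1))) / (ρ z ^ 2) ^ 2
        * fderiv ℝ ρ z (0, 1)
        + μ (ρ z) / ρ z ^ 2 * fderiv ℝ (fderiv ℝ ρ) z (0, 1) (0, 1)) z.2 := hq1.mul hSRx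
  -- Xx value
  have hXxval : fderiv ℝ (fderiv ℝ w) z (0, 1) (0, 1)
      = (deriv μ (ρ z) * fderiv ℝ ρ z (0, 1) * ρ z ^ 2
        - μ (ρ z) * ((2 : ℕ) * ρ z ^ (2 - 1) * fderiv ℝ ρ z (0, 1))) / (ρ z ^ 2) ^ 2
        * fderiv ℝ ρ z (0, 1)
        + μ (ρ z) / ρ z ^ 2 * fderiv ℝ (fderiv ℝ ρ) z (0, 1) (0, 1) := by
    refine hSWxx.unique (hq2.congr_of_eventuallyEq ?_)
    filter_upwards [hmemx] with y hy
    exact (hpdxw _ hy).symm.trans (hX _ hy)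
  -- Tx value (x-derivative of time equation of w)
  have hq3 : HasDerivAt (fun y => -(u (z.1, y) * (μ (ρ (z.1, y)) / ρ (z.1, y) ^ 2
        * fderiv ℝ ρ (z.1, y) (0, 1))
      + μ (ρ (z.1, y)) * fderiv ℝ u (z.1, y) (0, 1) / ρ (z.1, y)))
      (-((fderiv ℝ u z (0, 1) * (μ (ρ z) / ρ z ^ 2 * fderiv ℝ ρ z (0, 1))
        + u z * ((deriv μ (ρ z) * fderiv ℝ ρ z (0, 1) * ρ z ^ 2
          - μ (ρ z) * ((2 : ℕ) * ρ z ^ (2 - 1) * fderiv ℝ ρ z (0, 1))) / (ρ z ^ 2) ^ 2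
          * fderiv ℝ ρ z (0, 1)
          + μ (ρ z) / ρ z ^ 2 * fderiv ℝ (fderiv ℝ ρ) z (0, 1) (0, 1)))
        + ((deriv μ (ρ z) * fderiv ℝ ρ z (0, 1) * fderiv ℝ u z (0, 1)
            + μ (ρ z) * fderiv ℝ (fderiv ℝ u) z (0, 1) (0, 1)) * ρ z
          - μ (ρ z) * fderiv ℝ u z (0, 1) * fderiv ℝ ρ z (0, 1)) / ρ z ^ 2)) z.2 :=
    ((hSux.mul hq2).add ((hSmx.mul hSUx).div hSrx hrne)).neg
  have hTxval : fderiv ℝ (fderiv ℝ w) z (0, 1) (1, 0)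
      = -((fderiv ℝ u z (0, 1) * (μ (ρ z) / ρ z ^ 2 * fderiv ℝ ρ z (0, 1))
        + u z * ((deriv μ (ρ z) * fderiv ℝ ρ z (0, 1) * ρ z ^ 2
          - μ (ρ z) * ((2 : ℕ) * ρ z ^ (2 - 1) * fderiv ℝ ρ z (0, 1))) / (ρ z ^ 2) ^ 2
          * fderiv ℝ ρ z (0, 1)
          + μ (ρ z) / ρ z ^ 2 * fderiv ℝ (fderiv ℝ ρ) z (0, 1) (0, 1)))
        + ((deriv μ (ρ z) * fderiv ℝ ρ z (0, 1) * fderiv ℝ u z (0, 1)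
            + μ (ρ z) * fderiv ℝ (fderiv ℝ u) z (0, 1) (0, 1)) * ρ z
          - μ (ρ z) * fderiv ℝ u z (0, 1) * fderiv ℝ ρ z (0, 1)) / ρ z ^ 2) := by
    refine hSWtx.unique (hq3.congr_of_eventuallyEq ?_)
    filter_upwards [hmemx] with y hy
    exact (hpdtw _ hy).symm.trans (hT _ hy)
  have hXtval : fderiv ℝ (fderiv ℝ w) z (1, 0) (0, 1)
      = fderiv ℝ (fderiv ℝ w) z (0, 1) (1, 0) := hsymm
  -- v slice derivatives
  have hvx : HasDerivAt (fun y => v (z.1, y))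
      (fderiv ℝ u z (0, 1) + fderiv ℝ (fderiv ℝ w) z (0, 1) (0, 1)) z.2 := by
    refine (hSux.add hSWxx).congr_of_eventuallyEq ?_
    filter_upwards [hmemx] with y hy
    exact hveq _ hy
  have hvt : HasDerivAt (fun s => v (s, z.2))
      (fderiv ℝ u z (1, 0) + fderiv ℝ (fderiv ℝ w) z (1, 0) (0, 1)) z.1 := by
    refine (hSut.add hSWx1).congr_of_eventuallyEq ?_
    filter_upwards [hmemt] with s hs
    exact hveq _ hs
  -- the momentum equation in scalar form
  have hA : pdt (fun q => ρ q * u q) z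
      = fderiv ℝ ρ z (1, 0) * u z + ρ z * fderiv ℝ u z (1, 0) := (hSrt.mul hSut).deriv
  have hB : pdx (fun q => ρ q * u q ^ 2) z
      = fderiv ℝ ρ z (0, 1) * u z ^ 2
        + ρ z * ((2 : ℕ) * u z ^ (2 - 1) * fderiv ℝ u z (0, 1)) :=
    (hSrx.mul (hSux.pow 2)).deriv
  have hCmu : pdx (fun q => μ (ρ q) * pdx u q) z
      = deriv μ (ρ z) * fderiv ℝ ρ z (0, 1) * fderiv ℝ u z (0, 1)
        + μ (ρ z) * fderiv ℝ (fderiv ℝ u) z (0, 1) (0, 1) := by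
    refine HasDerivAt.deriv (((hSmx.mul hSUx)).congr_of_eventuallyEq ?_)
    filter_upwards [hmemx] with y hy
    rw [hpdxu _ hy]; rfl
  have hD : pdx (fun q => ρ q ^ γ) z = γ * ρ z ^ (γ - 1) * fderiv ℝ ρ z (0, 1) :=
    by have h := ((Real.hasDerivAt_rpow_const (p := γ) (Or.inl hrne)).comp z.2 hSrx).deriv; exact h
  have hmomz := hmom z hz
  rw [hA, hB, hCmu, hD] at hmomz
  have hmassz : fderiv ℝ ρ z (1, 0)
      = -(fderiv ℝ ρ z (0, 1) * u z + ρ z * fderiv ℝ u z (0, 1)) := by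
    rw [← (hasDerivAt_slice1 (hρd z hz)).deriv]
    exact hmass' z hz
  -- intermediate algebraic identities
  have hut2 : ρ z * fderiv ℝ u z (1, 0)
      = deriv μ (ρ z) * fderiv ℝ ρ z (0, 1) * fderiv ℝ u z (0, 1)
        + μ (ρ z) * fderiv ℝ (fderiv ℝ u) z (0, 1) (0, 1)
        - γ * ρ z ^ (γ - 1) * fderiv ℝ ρ z (0, 1)
        - ρ z * u z * fderiv ℝ u z (0, 1) := by
    rw [hmassz] at hmomz
    push_cast at hmomz
    linear_combination hmomz
  have hXt2 : ρ z * fderiv ℝ (fderiv ℝ w) z (1, 0) (0, 1)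
      = -(u z * ρ z * fderiv ℝ (fderiv ℝ w) z (0, 1) (0, 1)
        + (deriv μ (ρ z) * fderiv ℝ ρ z (0, 1) * fderiv ℝ u z (0, 1)
          + μ (ρ z) * fderiv ℝ (fderiv ℝ u) z (0, 1) (0, 1))) := by
    rw [hXtval, hTxval, hXxval]
    push_cast
    field_simp
    ring
  have hE2 : ρ z * ((fderiv ℝ u z (1, 0) + fderiv ℝ (fderiv ℝ w) z (1, 0) (0, 1))
        + u z * (fderiv ℝ u z (0, 1) + fderiv ℝ (fderiv ℝ w) z (0, 1) (0, 1)))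
      = -(γ * ρ z ^ (γ - 1) * fderiv ℝ ρ z (0, 1)) := by
    linear_combination hut2 + hXt2
  have hvt2 : fderiv ℝ u z (1, 0) + fderiv ℝ (fderiv ℝ w) z (1, 0) (0, 1)
      = (-(γ * ρ z ^ (γ - 1) * fderiv ℝ ρ z (0, 1))
        - ρ z * u z * (fderiv ℝ u z (0, 1) + fderiv ℝ (fderiv ℝ w) z (0, 1) (0, 1))) / ρ z := by
    field_simp
    linear_combination hE2
  -- v - u in terms of ∂ₓρ
  have hWz : fderiv ℝ w z (0, 1) = μ (ρ z) / ρ z ^ 2 * fderiv ℝ ρ z (0, 1) :=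
    (hpdxw z hz).symm.trans (hX z hz)
  have hRx2 : fderiv ℝ ρ z (0, 1) = (v z - u z) * ρ z ^ 2 / μ (ρ z) := by
    have hvv : v z = u z + μ (ρ z) / ρ z ^ 2 * fderiv ℝ ρ z (0, 1) := by
      rw [hveq z hz, hWz]
    field_simp at hvv ⊢
    linear_combination (-1 : ℝ) * hvv
  -- rpow gymnastics
  have hBB : |v z| ^ (p + 2) = |v z| ^ p * v z ^ 2 := by
    rw [Real.rpow_add' (abs_nonneg _) hp2]
    congr 1
    rw [show ((2 : ℝ)) = ((2 : ℕ) : ℝ) by norm_num, Real.rpow_natCast, sq_abs]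
  have hpow : ρ z ^ (γ + 1) = ρ z ^ (γ - 1) * ρ z ^ 2 := by
    rw [show γ + 1 = (γ - 1) + 2 by ring, Real.rpow_add hr,
      show ((2 : ℝ)) = ((2 : ℕ) : ℝ) by norm_num, Real.rpow_natCast]
  -- goal derivatives
  have habs := abs_rpow_hasDerivAt p hp (v z)
  have hslicev1 : HasDerivAt (fun s => |v (s, z.2)| ^ (p + 2))
      ((p + 2) * |v z| ^ p * v z * (fderiv ℝ u z (1, 0)
        + fderiv ℝ (fderiv ℝ w) z (1, 0) (0, 1))) z.1 := by have h := habs.comp z.1 hvt; exact h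
  have hslicev2 : HasDerivAt (fun y => |v (z.1, y)| ^ (p + 2))
      ((p + 2) * |v z| ^ p * v z * (fderiv ℝ u z (0, 1)
        + fderiv ℝ (fderiv ℝ w) z (0, 1) (0, 1))) z.2 := by have h := habs.comp z.2 hvx; exact h
  have hgoal1 : pdt (fun q => ρ q * |v q| ^ (p + 2) / (p + 2)) z
      = (fderiv ℝ ρ z (1, 0) * |v z| ^ (p + 2)
        + ρ z * ((p + 2) * |v z| ^ p * v z * (fderiv ℝ u z (1, 0)
          + fderiv ℝ (fderiv ℝ w) z (1, 0) (0, 1)))) / (p + 2) :=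
    ((hSrt.mul hslicev1).div_const (p + 2)).deriv
  have hgoal2 : pdx (fun q => ρ q * u q * |v q| ^ (p + 2) / (p + 2)) z
      = ((fderiv ℝ ρ z (0, 1) * u z + ρ z * fderiv ℝ u z (0, 1)) * |v z| ^ (p + 2)
        + ρ z * u z * ((p + 2) * |v z| ^ p * v z * (fderiv ℝ u z (0, 1)
          + fderiv ℝ (fderiv ℝ w) z (0, 1) (0, 1)))) / (p + 2) :=
    (((hSrx.mul hSux).mul hslicev2).div_const (p + 2)).deriv
  rw [hgoal1, hgoal2, hmassz, hvt2, hBB, hpow, hRx2]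
  field_simp
  ring
end

section
/- Let 1 < q < 2 and let w : ℝ → ℝ be differentiable at every point, with w square-integrable on ℝ. Suppose there exist functions f, g : ℝ → ℝ with f square-integrable on ℝ and g ∈ L^q(ℝ), such that the derivative of w equals f + g at every point. Then w is bounded on ℝ. -/
open Real MeasureTheory Set
open scoped ENNReal

-- aux 1: integrable on finite-measure set
lemma aux_integrableOn {h : ℝ → ℝ} {p : ℝ≥0∞} (hp : 1 ≤ p)
    (hh : MemLp h p (volume : Measure ℝ)) {s : Set ℝ} (hs : volume s ≠ ⊤) :
    IntegrableOn h s volume := by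
  have : IsFiniteMeasure ((volume : Measure ℝ).restrict s) := by
    constructor
    rw [Measure.restrict_apply_univ]
    exact hs.lt_top
  exact memLp_one_iff_integrable.mp ((hh.restrict s).mono_exponent hp)

-- aux 2: unit interval L¹ bound
lemma aux_unit_bound {h : ℝ → ℝ} {p : ℝ≥0∞} (hp : 1 ≤ p)
    (hh : MemLp h p (volume : Measure ℝ)) (x : ℝ) :
    ∫ t in Ioc x (x+1), |h t| ≤ (eLpNorm h p volume).toReal := by
  set μ := (volume : Measure ℝ).restrict (Ioc x (x+1)) with hμ
  have hμuniv : μ Set.univ = 1 := by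
    rw [hμ, Measure.restrict_apply_univ, Real.volume_Ioc]
    simp
  have h1 : ∫ t in Ioc x (x+1), |h t| = (eLpNorm h 1 μ).toReal := by
    rw [eLpNorm_one_eq_lintegral_enorm]
    rw [← integral_norm_eq_lintegral_enorm (hh.aestronglyMeasurable.restrict)]
    simp [Real.norm_eq_abs]
  have h2 : eLpNorm h 1 μ ≤ eLpNorm h p μ := by
    have := eLpNorm_le_eLpNorm_mul_rpow_measure_univ (μ := μ) hp hh.aestronglyMeasurable.restrict
    rwa [hμuniv, ENNReal.one_rpow, mul_one] at this
  have h3 : eLpNorm h p μ ≤ eLpNorm h p volume :=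
    eLpNorm_mono_measure _ Measure.restrict_le_self
  rw [h1]
  exact ENNReal.toReal_mono hh.eLpNorm_ne_top (h2.trans h3)

theorem stmt_14 (q : ℝ) (hq1 : 1 < q) (hq2 : q < 2) (w f g : ℝ → ℝ)
    (hw : Differentiable ℝ w)
    (hw2 : MemLp w 2 (volume : Measure ℝ))
    (hf : MemLp f 2 (volume : Measure ℝ))
    (hg : MemLp g (ENNReal.ofReal q) (volume : Measure ℝ))
    (hderiv : ∀ x, deriv w x = f x + g x) :
    ∃ M : ℝ, ∀ x : ℝ, |w x| ≤ M := by
  have hq1' : (1 : ℝ≥0∞) ≤ ENNReal.ofReal q := by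
    rw [← ENNReal.ofReal_one]
    exact ENNReal.ofReal_le_ofReal hq1.le
  set Cw := (eLpNorm w 2 volume).toReal with hCw
  set Cf := (eLpNorm f 2 volume).toReal with hCf
  set Cg := (eLpNorm g (ENNReal.ofReal q) volume).toReal with hCg
  refine ⟨Cw + 1 + (Cf + Cg), fun x => ?_⟩
  -- step: find y in [x, x+1] with |w y| ≤ Cw + 1
  have hymem : ∃ y ∈ Icc x (x+1), |w y| ≤ Cw + 1 := by
    by_contra hcon
    push_neg at hcon
    have hlow : ∀ y ∈ Icc x (x+1),
        (ENNReal.ofReal (Cw+1)) ^ (2:ℝ) ≤ (‖w y‖₊ : ℝ≥0∞) ^ (2:ℝ) := by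
      intro y hy
      refine ENNReal.rpow_le_rpow ?_ (by norm_num)
      rw [← enorm_eq_nnnorm, ← ofReal_norm, Real.norm_eq_abs]
      exact ENNReal.ofReal_le_ofReal (hcon y hy).le
    have hI : ∫⁻ t, (‖w t‖₊ : ℝ≥0∞) ^ (2:ℝ) ∂volume = (eLpNorm w 2 volume) ^ (2:ℝ) := by
      rw [eLpNorm_eq_lintegral_rpow_enorm_toReal (by norm_num) (by norm_num), ← ENNReal.rpow_mul]
      norm_num
      rfl
    have hlow2 : (ENNReal.ofReal (Cw+1)) ^ (2:ℝ)
        ≤ ∫⁻ t in Icc x (x+1), (‖w t‖₊ : ℝ≥0∞) ^ (2:ℝ) ∂volume := by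
      calc (ENNReal.ofReal (Cw+1)) ^ (2:ℝ)
          = ∫⁻ _ in Icc x (x+1), (ENNReal.ofReal (Cw+1)) ^ (2:ℝ) ∂volume := by
            rw [setLIntegral_const, Real.volume_Icc]
            simp
        _ ≤ _ := by
            refine setLIntegral_mono ?_ hlow
            exact (hw.continuous.measurable.nnnorm.coe_nnreal_ennreal).pow_const _
    have hlt : (eLpNorm w 2 volume) ^ (2:ℝ) < (ENNReal.ofReal (Cw+1)) ^ (2:ℝ) := by
      refine ENNReal.rpow_lt_rpow ?_ (by norm_num)
      calc eLpNorm w 2 volume = ENNReal.ofReal Cw :=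
            (ENNReal.ofReal_toReal hw2.eLpNorm_ne_top).symm
        _ < ENNReal.ofReal (Cw+1) := by
            refine (ENNReal.ofReal_lt_ofReal_iff (by positivity)).mpr (by linarith)
    have : (ENNReal.ofReal (Cw+1)) ^ (2:ℝ) < (ENNReal.ofReal (Cw+1)) ^ (2:ℝ) :=
      lt_of_le_of_lt (hlow2.trans ((setLIntegral_le_lintegral _ _).trans_eq hI)) hlt
    exact lt_irrefl _ this
  obtain ⟨y, hy, hwy⟩ := hymem
  -- FTC
  have hsub : uIoc x y ⊆ Ioc x (x+1) := by
    rw [uIoc_of_le hy.1]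
    exact Ioc_subset_Ioc le_rfl hy.2
  have hintf : IntegrableOn f (Ioc x (x+1)) volume :=
    aux_integrableOn one_le_two hf (by simp)
  have hintg : IntegrableOn g (Ioc x (x+1)) volume :=
    aux_integrableOn hq1' hg (by simp)
  have hintfg : IntegrableOn (fun t => f t + g t) (Ioc x (x+1)) volume := hintf.add hintg
  have hii : IntervalIntegrable (deriv w) volume x y := by
    rw [intervalIntegrable_iff]
    have : IntegrableOn (fun t => f t + g t) (uIoc x y) volume := hintfg.mono_set hsub
    exact this.congr_fun (fun t _ => (hderiv t).symm) measurableSet_uIoc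
  have hftc : ∫ t in x..y, deriv w t = w y - w x :=
    intervalIntegral.integral_eq_sub_of_hasDerivAt (fun t _ => (hw t).hasDerivAt) hii
  have habs : |∫ t in x..y, deriv w t| ≤ ∫ t in Ioc x (x+1), (|f t| + |g t|) := by
    calc |∫ t in x..y, deriv w t| ≤ ∫ t in x..y, |deriv w t| :=
          intervalIntegral.abs_integral_le_integral_abs hy.1
      _ = ∫ t in Ioc x y, |deriv w t| := by
          rw [intervalIntegral.integral_of_le hy.1]
      _ ≤ ∫ t in Ioc x y, (|f t| + |g t|) := by
          refine setIntegral_mono_on ?_ ?_ measurableSet_Ioc ?_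
          · have h1 : IntegrableOn (fun t => |f t + g t|) (Ioc x y) volume :=
              (hintfg.mono_set (Ioc_subset_Ioc le_rfl hy.2)).abs
            exact h1.congr_fun (fun t _ => by rw [hderiv t]) measurableSet_Ioc
          · exact ((hintf.mono_set (Ioc_subset_Ioc le_rfl hy.2)).abs.add
              (hintg.mono_set (Ioc_subset_Ioc le_rfl hy.2)).abs)
          · intro t _
            rw [hderiv t]
            exact abs_add_le _ _
      _ ≤ ∫ t in Ioc x (x+1), (|f t| + |g t|) := by
          refine setIntegral_mono_set (hintf.abs.add hintg.abs) ?_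
            (HasSubset.Subset.eventuallyLE (Ioc_subset_Ioc le_rfl hy.2))
          filter_upwards with t using add_nonneg (abs_nonneg _) (abs_nonneg _)
  have hsplit : ∫ t in Ioc x (x+1), (|f t| + |g t|)
      = (∫ t in Ioc x (x+1), |f t|) + ∫ t in Ioc x (x+1), |g t| :=
    integral_add hintf.abs hintg.abs
  have hfin : |w x| ≤ |w y| + |∫ t in x..y, deriv w t| := by
    have : w x = w y - ∫ t in x..y, deriv w t := by rw [hftc]; ring
    rw [this]
    exact abs_sub _ _
  have hb1 := aux_unit_bound one_le_two hf x
  have hb2 := aux_unit_bound hq1' hg x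
  calc |w x| ≤ |w y| + |∫ t in x..y, deriv w t| := hfin
    _ ≤ (Cw + 1) + ((∫ t in Ioc x (x+1), |f t|) + ∫ t in Ioc x (x+1), |g t|) := by
        rw [← hsplit]; exact add_le_add hwy habs
    _ ≤ Cw + 1 + (Cf + Cg) := by
        exact add_le_add le_rfl (add_le_add hb1 hb2)
end
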